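/- Let H be a complex Hilbert space and g : H →L[ℂ] H a self-adjoint unitary (g* = g and g ∘ g = id), regarded as the grading operator of the graded elementary C*-algebra K(H). Suppose σ is a Real structure on K(H) (a conjugate-linear *-algebra automorphism with σ ∘ σ = id) that commutes with the grading automorphism, i.e., σ(g ∘ T ∘ g) = g ∘ σ(T) ∘ g for every compact operator T. Then there exists an antiunitary J on H such that: (i) σ(T) = J ∘ T ∘ J⁻¹ for every compact operator T; (ii) J ∘ J = id or J ∘ J = −id; and (iii) J is homogeneous, i.e., J ∘ g = g ∘ J or J ∘ g = −(g ∘ J). -/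

import Mathlib

set_option linter.unusedSectionVars false
set_option maxHeartbeats 1000000

open scoped ComplexInnerProductSpace

section RankOne

variable {H : Type*} [NormedAddCommGroup H] [InnerProductSpace ℂ H] [CompleteSpace H]

/-- rank one operator `|x⟩⟨y|`. -/
noncomputable def rk (x y : H) : H →L[ℂ] H := (innerSL ℂ y).smulRight x

lemma rk_apply (x y z : H) : rk x y z = ⟪y, z⟫ • x := rfl

lemma rk_compact (x y : H) : IsCompactOperator (rk x y : H → H) := by
  refine ⟨(fun c : ℂ => c • x) '' Metric.closedBall 0 (‖y‖ + 1),
    (isCompact_closedBall 0 _).image (by fun_prop), ?_⟩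
  filter_upwards [Metric.ball_mem_nhds (0 : H) one_pos] with z hz
  refine ⟨⟪y, z⟫, ?_, rfl⟩
  simp only [Metric.mem_closedBall, dist_zero_right]
  calc ‖⟪y, z⟫‖ ≤ ‖y‖ * ‖z‖ := norm_inner_le_norm y z
    _ ≤ ‖y‖ * 1 := by
        have := mem_ball_zero_iff.mp hz
        nlinarith [norm_nonneg y, this.le]
    _ ≤ ‖y‖ + 1 := by nlinarith [norm_nonneg y]

lemma rk_add_left (x x' y : H) : rk (x + x') y = rk x y + rk x' y := by
  ext z; simp [rk_apply, smul_add]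

lemma rk_smul_left (c : ℂ) (x y : H) : rk (c • x) y = c • rk x y := by
  ext z
  rw [ContinuousLinearMap.smul_apply, rk_apply, rk_apply, smul_comm]

lemma rk_smul_right (c : ℂ) (x y : H) : rk x (c • y) = (starRingEnd ℂ c) • rk x y := by
  ext z; simp [rk_apply, inner_smul_left, smul_smul]; rw [mul_comm]

lemma comp_rk (T : H →L[ℂ] H) (x y : H) : T.comp (rk x y) = rk (T x) y := by
  ext z; simp [rk_apply]

lemma rk_comp_rk (x y u v : H) : (rk x y).comp (rk u v) = ⟪y, u⟫ • rk x v := by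
  ext z; simp [rk_apply, inner_smul_right, smul_smul, mul_comm]

lemma adjoint_rk (x y : H) : ContinuousLinearMap.adjoint (rk x y) = rk y x := by
  ext z
  refine ext_inner_left ℂ fun w => ?_
  rw [ContinuousLinearMap.adjoint_inner_right]
  simp [rk_apply, inner_smul_left, inner_smul_right, mul_comm]

end RankOne

/-- The `*`-algebra `K(H)` of compact operators on `H`, realized as the subtype of
continuous linear maps `H →L[ℂ] H` that are compact operators. -/
abbrev CompactOp (H : Type*) [NormedAddCommGroup H] [NormedSpace ℂ H] : Type _ :=
  {T : H →L[ℂ] H // IsCompactOperator T}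

/-- Let `g` be a self-adjoint unitary on a complex Hilbert space `H`,
the grading operator of the graded elementary C*-algebra `K(H)`, and let `σ` be a Real
structure on `K(H)` (a conjugate-linear `*`-automorphism with `σ ∘ σ = id`) commuting
with the grading automorphism `Ad_g`.  Then `σ` is implemented by an antiunitary `J`
with `J ∘ J = ± id` which is homogeneous: `J ∘ g = ± g ∘ J`. -/
theorem stmt_7 {H : Type*} [NormedAddCommGroup H] [InnerProductSpace ℂ H] [CompleteSpace H]
    (g : H →L[ℂ] H)
    (hg_sa : ContinuousLinearMap.adjoint g = g)
    (hg_unitary : g.comp g = ContinuousLinearMap.id ℂ H)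
    (σ : CompactOp H → CompactOp H)
    (hbij : Function.Bijective σ)
    (haddσ : ∀ (T S : CompactOp H) (h : IsCompactOperator (T.1 + S.1)),
      (σ ⟨T.1 + S.1, h⟩).1 = (σ T).1 + (σ S).1)
    (hsmulσ : ∀ (c : ℂ) (T : CompactOp H) (h : IsCompactOperator (c • T.1)),
      (σ ⟨c • T.1, h⟩).1 = (starRingEnd ℂ c) • (σ T).1)
    (hmulσ : ∀ (T S : CompactOp H) (h : IsCompactOperator (T.1.comp S.1)),
      (σ ⟨T.1.comp S.1, h⟩).1 = (σ T).1.comp (σ S).1)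
    (hstarσ : ∀ (T : CompactOp H) (h : IsCompactOperator (ContinuousLinearMap.adjoint T.1)),
      (σ ⟨ContinuousLinearMap.adjoint T.1, h⟩).1 = ContinuousLinearMap.adjoint (σ T).1)
    (hinvol : ∀ T : CompactOp H, σ (σ T) = T)
    (hgrading : ∀ (T : CompactOp H) (h : IsCompactOperator (g.comp (T.1.comp g))),
      (σ ⟨g.comp (T.1.comp g), h⟩).1 = g.comp ((σ T).1.comp g)) :
    ∃ J Jinv : H → H,
      Function.LeftInverse Jinv J ∧ Function.RightInverse Jinv J ∧
      (∀ x y : H, J (x + y) = J x + J y) ∧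
      (∀ (c : ℂ) (x : H), J (c • x) = (starRingEnd ℂ c) • J x) ∧
      (∀ x y : H, ⟪J x, J y⟫ = ⟪y, x⟫) ∧
      (∀ (T : CompactOp H) (x : H), (σ T).1 x = J (T.1 (Jinv x))) ∧
      ((∀ x : H, J (J x) = x) ∨ (∀ x : H, J (J x) = -x)) ∧
      ((∀ x : H, J (g x) = g (J x)) ∨ (∀ x : H, J (g x) = -(g (J x)))) := by
  obtain hsub | hnt := subsingleton_or_nontrivial H
  · exact ⟨id, id, fun x => rfl, fun x => rfl, fun x y => rfl,
      fun c x => Subsingleton.elim _ _,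
      fun x y => by simp [Subsingleton.elim x y],
      fun T x => Subsingleton.elim _ _, Or.inl fun x => Subsingleton.elim _ _,
      Or.inl fun x => Subsingleton.elim _ _⟩
  have hgg : ∀ x : H, g (g x) = x := by
    intro x
    have := congrArg (fun T : H →L[ℂ] H => T x) hg_unitary
    simpa using this
  obtain ⟨e, he⟩ : ∃ e : H, ‖e‖ = 1 := exists_norm_eq H zero_le_one
  have hee : ⟪e, e⟫ = (1 : ℂ) := by
    rw [inner_self_eq_norm_sq_to_K, he]; norm_num
  have hσ_congr : ∀ (A B : H →L[ℂ] H) (hA : IsCompactOperator A) (hB : IsCompactOperator B),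
      A = B → (σ ⟨A, hA⟩).1 = (σ ⟨B, hB⟩).1 := by
    rintro A B hA hB rfl; rfl
  have hinj : ∀ T S : CompactOp H, σ T = σ S → T = S := fun T S h => by
    rw [← hinvol T, h, hinvol]
  have hcompc : ∀ (T S : H →L[ℂ] H), IsCompactOperator T → IsCompactOperator (T.comp S) := by
    intro T S h
    exact h.comp_clm S
  have hcompc' : ∀ (T S : H →L[ℂ] H), IsCompactOperator S → IsCompactOperator (T.comp S) := by
    intro T S h
    exact h.clm_comp T
  set P : H →L[ℂ] H := (σ ⟨rk e e, rk_compact e e⟩).1 with hPdef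
  have hPc : IsCompactOperator P := (σ ⟨rk e e, rk_compact e e⟩).2
  -- P is idempotent
  have hPP : P.comp P = P := by
    have hc : IsCompactOperator ((rk e e).comp (rk e e) : H → H) :=
      hcompc _ _ (rk_compact e e)
    have hmul := hmulσ ⟨rk e e, rk_compact e e⟩ ⟨rk e e, rk_compact e e⟩ hc
    rw [hσ_congr _ _ hc (rk_compact e e) (by rw [rk_comp_rk, hee, one_smul])] at hmul
    exact hmul.symm
  -- P is self-adjoint
  have hPsa : ContinuousLinearMap.adjoint P = P := by
    have hadjc : IsCompactOperator (ContinuousLinearMap.adjoint (rk e e) : H → H) := by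
      rw [adjoint_rk]; exact rk_compact e e
    have hstar := hstarσ ⟨rk e e, rk_compact e e⟩ hadjc
    rw [hσ_congr _ _ hadjc (rk_compact e e) (adjoint_rk e e)] at hstar
    exact hstar.symm
  -- P ≠ 0
  have hPne : P ≠ 0 := by
    intro h0
    have hzc : IsCompactOperator ((0 : H →L[ℂ] H) : H → H) := by
      exact isCompactOperator_zero
    have h00 : IsCompactOperator (((0 : ℂ) • (0 : H →L[ℂ] H) : H →L[ℂ] H) : H → H) := by
      simpa using hzc
    have hσ0 : (σ ⟨0, hzc⟩).1 = 0 := by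
      have hs := hsmulσ 0 ⟨0, hzc⟩ h00
      rw [hσ_congr _ _ h00 hzc (by simp)] at hs
      simpa using hs
    have hE0 : (⟨rk e e, rk_compact e e⟩ : CompactOp H) = ⟨0, hzc⟩ :=
      hinj _ _ (Subtype.ext (by rw [← hPdef, h0, hσ0]))
    have he0 := congrArg (fun T : CompactOp H => T.1 e) hE0
    simp only [rk_apply, hee, one_smul, ContinuousLinearMap.zero_apply] at he0
    rw [he0, norm_zero] at he
    exact one_ne_zero he.symm
  obtain ⟨x₀, hx₀⟩ : ∃ x, P x ≠ 0 := by
    by_contra h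
    push_neg at h
    exact hPne (by ext z; simp [h z])
  -- operator identity: P ∘ rk x₀ x₀ ∘ P = c • P
  set B : CompactOp H := σ ⟨rk x₀ x₀, rk_compact x₀ x₀⟩ with hBdef
  have hBB : (σ B).1 = rk x₀ x₀ := by rw [hBdef, hinvol]
  set c : ℂ := starRingEnd ℂ ⟪e, B.1 e⟫ with hcdef
  have hop : P.comp ((rk x₀ x₀).comp P) = c • P := by
    have hc1 : IsCompactOperator (B.1.comp (rk e e) : H → H) := hcompc _ _ B.2
    have hmid : (rk e e).comp (B.1.comp (rk e e)) = ⟪e, B.1 e⟫ • rk e e := by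
      rw [comp_rk, rk_comp_rk]
    have hc2 : IsCompactOperator ((rk e e).comp (B.1.comp (rk e e)) : H → H) :=
      hcompc _ _ (rk_compact e e)
    have hc3 : IsCompactOperator ((⟪e, B.1 e⟫ • rk e e : H →L[ℂ] H) : H → H) :=
      hmid ▸ hc2
    have s1 := hmulσ B ⟨rk e e, rk_compact e e⟩ hc1
    have s2 := hmulσ ⟨rk e e, rk_compact e e⟩ ⟨B.1.comp (rk e e), hc1⟩ hc2
    have s3 := hsmulσ ⟪e, B.1 e⟫ ⟨rk e e, rk_compact e e⟩ hc3
    rw [hσ_congr _ _ hc2 hc3 hmid, s3] at s2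
    rw [s1, hBB] at s2
    rw [hcdef]
    exact s2.symm
  have hPadj : ∀ u z : H, ⟪P u, z⟫ = ⟪u, P z⟫ := by
    intro u z
    conv_lhs => rw [← hPsa]
    exact ContinuousLinearMap.adjoint_inner_left P z u
  have hkey : ∀ z, ⟪P x₀, z⟫ • P x₀ = c • P z := by
    intro z
    have h1 := congrArg (fun T : H →L[ℂ] H => T z) hop
    simp only [ContinuousLinearMap.comp_apply, ContinuousLinearMap.smul_apply] at h1
    rw [rk_apply, map_smul] at h1
    rw [hPadj x₀ z]
    exact h1
  have hPPx : P (P x₀) = P x₀ := by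
    have := congrArg (fun T : H →L[ℂ] H => T x₀) hPP
    simpa using this
  have hc_eq : c = ⟪P x₀, P x₀⟫ := by
    have h1 := hkey (P x₀)
    rw [hPPx] at h1
    have h2 : (⟪P x₀, P x₀⟫ - c) • P x₀ = 0 := by
      rw [sub_smul, h1, sub_self]
    rcases smul_eq_zero.mp h2 with h3 | h3
    · exact (sub_eq_zero.mp h3).symm
    · exact absurd h3 hx₀
  have hrkP : rk (P x₀) (P x₀) = c • P := by
    ext z
    rw [rk_apply, ContinuousLinearMap.smul_apply]
    exact hkey z
  -- the unit vector f with P = rk f f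
  set a : ℂ := ((‖P x₀‖ : ℝ) : ℂ)⁻¹ with hadef
  set f : H := a • P x₀ with hfdef
  have hnx : (‖P x₀‖ : ℝ) ≠ 0 := norm_ne_zero_iff.mpr hx₀
  have hf1 : ‖f‖ = 1 := by
    rw [hfdef, norm_smul, hadef]
    simp only [norm_inv, Complex.norm_real, Real.norm_eq_abs, abs_norm]
    exact inv_mul_cancel₀ hnx
  have hff : ⟪f, f⟫ = (1 : ℂ) := by
    rw [inner_self_eq_norm_sq_to_K, hf1]; norm_num
  have hconja : starRingEnd ℂ a = a := by
    rw [hadef, map_inv₀, Complex.conj_ofReal]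
  have hnxC : ((‖P x₀‖ : ℝ) : ℂ) ≠ 0 := Complex.ofReal_ne_zero.mpr hnx
  have hcval : c = ((‖P x₀‖ : ℝ) : ℂ) ^ 2 := by
    rw [hc_eq, inner_self_eq_norm_sq_to_K]
    norm_cast
  have hPf : P = rk f f := by
    rw [hfdef, rk_smul_left, rk_smul_right, hconja, hrkP, smul_smul, smul_smul, hcval]
    rw [hadef]
    rw [show (((‖P x₀‖:ℝ):ℂ))⁻¹ * (((‖P x₀‖:ℝ):ℂ))⁻¹ * (((‖P x₀‖:ℝ):ℂ)) ^ 2 = 1 from by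
      rw [sq, show (((‖P x₀‖:ℝ):ℂ))⁻¹ * (((‖P x₀‖:ℝ):ℂ))⁻¹ * ((((‖P x₀‖:ℝ):ℂ)) * (((‖P x₀‖:ℝ):ℂ)))
          = ((((‖P x₀‖:ℝ):ℂ))⁻¹ * (((‖P x₀‖:ℝ):ℂ))) * ((((‖P x₀‖:ℝ):ℂ))⁻¹ * (((‖P x₀‖:ℝ):ℂ))) from by ring,
        inv_mul_cancel₀ hnxC, one_mul]]
    rw [one_smul]
  have hPfap : P f = f := by
    rw [hPf, rk_apply, hff, one_smul]
  -- the antiunitary J and its inverse K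
  set J : H → H := fun x => (σ ⟨rk x e, rk_compact x e⟩).1 f with hJdef
  set K : H → H := fun y => (σ ⟨rk y f, rk_compact y f⟩).1 e with hKdef
  -- intertwining
  have hint : ∀ (T : CompactOp H) (x : H), (σ T).1 (J x) = J (T.1 x) := by
    intro T x
    have hc : IsCompactOperator (T.1.comp (rk x e) : H → H) := hcompc _ _ T.2
    have h1 := hmulσ T ⟨rk x e, rk_compact x e⟩ hc
    rw [hσ_congr _ _ hc (rk_compact (T.1 x) e) (comp_rk T.1 x e)] at h1
    have h2 := congrArg (fun A : H →L[ℂ] H => A f) h1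
    simp only [ContinuousLinearMap.comp_apply] at h2
    exact h2.symm
  -- K ∘ J = id
  have hKJ : ∀ x, K (J x) = x := by
    intro x
    have h1 : rk (J x) f = ((σ ⟨rk x e, rk_compact x e⟩).1).comp P := by
      ext z
      rw [rk_apply, ContinuousLinearMap.comp_apply, hPf, rk_apply, map_smul]
    have hc : IsCompactOperator (((σ ⟨rk x e, rk_compact x e⟩).1).comp P : H → H) :=
      hcompc _ _ (σ ⟨rk x e, rk_compact x e⟩).2
    have h2 := hmulσ (σ ⟨rk x e, rk_compact x e⟩) (σ ⟨rk e e, rk_compact e e⟩) hc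
    rw [hinvol, hinvol] at h2
    have h3 : (σ ⟨rk (J x) f, rk_compact (J x) f⟩).1 = (rk x e).comp (rk e e) := by
      rw [hσ_congr _ _ (rk_compact (J x) f) hc h1]
      exact h2
    have h4 := congrArg (fun A : H →L[ℂ] H => A e) h3
    simp only [ContinuousLinearMap.comp_apply, rk_apply, hee, one_smul] at h4
    exact h4
  -- J ∘ K = id
  have hJK : ∀ y, J (K y) = y := by
    intro y
    have h1 : rk (K y) e = ((σ ⟨rk y f, rk_compact y f⟩).1).comp (rk e e) := by
      ext z
      rw [rk_apply, ContinuousLinearMap.comp_apply, rk_apply, map_smul]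
    have hc : IsCompactOperator (((σ ⟨rk y f, rk_compact y f⟩).1).comp (rk e e) : H → H) :=
      hcompc _ _ (σ ⟨rk y f, rk_compact y f⟩).2
    have h2 := hmulσ (σ ⟨rk y f, rk_compact y f⟩) ⟨rk e e, rk_compact e e⟩ hc
    rw [hinvol, ← hPdef] at h2
    have h3 : (σ ⟨rk (K y) e, rk_compact (K y) e⟩).1 = (rk y f).comp P := by
      rw [hσ_congr _ _ (rk_compact (K y) e) hc h1]
      exact h2
    have h4 := congrArg (fun A : H →L[ℂ] H => A f) h3
    simp only [ContinuousLinearMap.comp_apply] at h4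
    rw [hPfap, rk_apply, hff, one_smul] at h4
    exact h4
  -- additivity
  have hadd : ∀ x y : H, J (x + y) = J x + J y := by
    intro x y
    have hc : IsCompactOperator ((rk x e + rk y e : H →L[ℂ] H) : H → H) :=
      (rk_compact x e).add (rk_compact y e)
    have h1 := haddσ ⟨rk x e, rk_compact x e⟩ ⟨rk y e, rk_compact y e⟩ hc
    have h0 : (σ ⟨rk (x + y) e, rk_compact (x + y) e⟩).1
        = (σ ⟨rk x e, rk_compact x e⟩).1 + (σ ⟨rk y e, rk_compact y e⟩).1 := by
      rw [hσ_congr _ _ (rk_compact (x + y) e) hc (rk_add_left x y e)]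
      exact h1
    have h2 := congrArg (fun A : H →L[ℂ] H => A f) h0
    simpa using h2
  -- conjugate linearity
  have hsmul : ∀ (cc : ℂ) (x : H), J (cc • x) = (starRingEnd ℂ cc) • J x := by
    intro cc x
    have hc : IsCompactOperator ((cc • rk x e : H →L[ℂ] H) : H → H) := by
      exact (rk_compact x e).smul cc
    have h1 := hsmulσ cc ⟨rk x e, rk_compact x e⟩ hc
    have h0 : (σ ⟨rk (cc • x) e, rk_compact (cc • x) e⟩).1
        = (starRingEnd ℂ cc) • (σ ⟨rk x e, rk_compact x e⟩).1 := by
      rw [hσ_congr _ _ (rk_compact (cc • x) e) hc (rk_smul_left cc x e)]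
      exact h1
    have h2 := congrArg (fun A : H →L[ℂ] H => A f) h0
    simpa using h2
  -- inner products
  have hadjσ : ∀ x : H, ContinuousLinearMap.adjoint ((σ ⟨rk x e, rk_compact x e⟩).1)
      = (σ ⟨rk e x, rk_compact e x⟩).1 := by
    intro x
    have hca : IsCompactOperator (ContinuousLinearMap.adjoint (rk x e) : H → H) := by
      rw [adjoint_rk]; exact rk_compact e x
    have h1 := hstarσ ⟨rk x e, rk_compact x e⟩ hca
    rw [hσ_congr _ _ hca (rk_compact e x) (adjoint_rk x e)] at h1
    exact h1.symm
  have hinner : ∀ x y : H, ⟪J x, J y⟫ = ⟪y, x⟫ := by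
    intro x y
    have hc : IsCompactOperator (((rk e x).comp (rk y e) : H →L[ℂ] H) : H → H) :=
      hcompc _ _ (rk_compact e x)
    have hc2 : IsCompactOperator ((⟪x, y⟫ • rk e e : H →L[ℂ] H) : H → H) :=
      (rk_comp_rk e x y e) ▸ hc
    have h1 := hmulσ ⟨rk e x, rk_compact e x⟩ ⟨rk y e, rk_compact y e⟩ hc
    have h2 := hsmulσ ⟪x, y⟫ ⟨rk e e, rk_compact e e⟩ hc2
    have h3 : (σ ⟨rk e x, rk_compact e x⟩).1.comp ((σ ⟨rk y e, rk_compact y e⟩).1)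
        = (starRingEnd ℂ ⟪x, y⟫) • P := by
      rw [← h1, hσ_congr _ _ hc hc2 (rk_comp_rk e x y e), h2, ← hPdef]
    calc ⟪J x, J y⟫
        = ⟪f, ContinuousLinearMap.adjoint ((σ ⟨rk x e, rk_compact x e⟩).1)
            ((σ ⟨rk y e, rk_compact y e⟩).1 f)⟫ := by
          rw [ContinuousLinearMap.adjoint_inner_right]
      _ = ⟪f, ((σ ⟨rk e x, rk_compact e x⟩).1.comp ((σ ⟨rk y e, rk_compact y e⟩).1)) f⟫ := by
          rw [hadjσ x]; rfl
      _ = ⟪f, (starRingEnd ℂ ⟪x, y⟫) • P f⟫ := by rw [h3]; rfl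
      _ = ⟪y, x⟫ := by
          rw [hPfap, inner_smul_right, hff, mul_one, inner_conj_symm]
  -- J ∘ J = c₂ • id
  have hJJ : ∀ x : H, J (J x) = ⟪e, J f⟫ • x := by
    intro x
    have h1 : rk (J x) e = ((σ ⟨rk x e, rk_compact x e⟩).1).comp (rk f e) := by
      ext z
      rw [rk_apply, ContinuousLinearMap.comp_apply, rk_apply, map_smul]
    have hc : IsCompactOperator (((σ ⟨rk x e, rk_compact x e⟩).1).comp (rk f e) : H → H) :=
      hcompc _ _ (σ ⟨rk x e, rk_compact x e⟩).2
    have h2 := hmulσ (σ ⟨rk x e, rk_compact x e⟩) ⟨rk f e, rk_compact f e⟩ hc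
    rw [hinvol] at h2
    have h3 : (σ ⟨rk (J x) e, rk_compact (J x) e⟩).1
        = (rk x e).comp ((σ ⟨rk f e, rk_compact f e⟩).1) := by
      rw [hσ_congr _ _ (rk_compact (J x) e) hc h1]
      exact h2
    have h4 := congrArg (fun A : H →L[ℂ] H => A f) h3
    simp only [ContinuousLinearMap.comp_apply] at h4
    rw [rk_apply] at h4
    exact h4
  have hJinner : ∀ x : H, ⟪J x, J x⟫ = ⟪x, x⟫ := fun x => by rw [hinner]
  have hJe : J e ≠ 0 := by
    intro h0
    have h1 := hJinner e
    rw [h0, hee, inner_zero_left] at h1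
    exact one_ne_zero h1.symm
  set c₂ : ℂ := ⟪e, J f⟫ with hc₂def
  have hscal : ∀ (u v : ℂ) (w : H), w ≠ 0 → u • w = v • w → u = v := by
    intro u v w hw h
    have h2 : (u - v) • w = 0 := by rw [sub_smul, h, sub_self]
    rcases smul_eq_zero.mp h2 with h3 | h3
    · exact sub_eq_zero.mp h3
    · exact absurd h3 hw
  have hc₂real : starRingEnd ℂ c₂ = c₂ := by
    have h1 : J (J (J e)) = (starRingEnd ℂ c₂) • J e := by
      rw [hJJ e, hsmul]
    have h2 : J (J (J e)) = c₂ • J e := hJJ (J e)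
    exact hscal _ _ _ hJe (h1.symm.trans h2)
  have hc₂sq : c₂ * c₂ = 1 := by
    have h1 : ⟪J (J e), J (J e)⟫ = (1 : ℂ) := by
      rw [hJinner, hJinner, hee]
    rw [hJJ e, inner_smul_left, inner_smul_right, hee, mul_one, hc₂real] at h1
    exact h1
  -- homogeneity
  have hgcompact : ∀ T : CompactOp H, IsCompactOperator (g.comp (T.1.comp g) : H → H) :=
    fun T => hcompc' _ _ (hcompc _ _ T.2)
  have hA : ∀ (T : CompactOp H) (x : H),
      (σ T).1 (g (J (g x))) = g (J (g (T.1 x))) := by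
    intro T x
    have hGT := hgrading T (hgcompact T)
    have h1 := hint ⟨g.comp (T.1.comp g), hgcompact T⟩ (g x)
    rw [hGT] at h1
    simp only [ContinuousLinearMap.comp_apply] at h1
    rw [hgg x] at h1
    have h2 := congrArg g h1
    rw [hgg] at h2
    exact h2
  have hKσ : ∀ (T : CompactOp H) (v : H), K ((σ T).1 v) = T.1 (K v) := by
    intro T v
    have h1 := hint T (K v)
    rw [hJK v] at h1
    have h2 := congrArg K h1
    rw [hKJ] at h2
    exact h2
  have hU : ∀ (T : CompactOp H) (x : H),
      K (g (J (g (T.1 x)))) = T.1 (K (g (J (g x)))) := by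
    intro T x
    rw [← hA T x, hKσ]
  set lam : ℂ := ⟪e, K (g (J (g e)))⟫ with hlamdef
  have hUx : ∀ x : H, K (g (J (g x))) = lam • x := by
    intro x
    have h1 := hU ⟨rk x e, rk_compact x e⟩ e
    simp only [rk_apply, hee, one_smul] at h1
    exact h1
  have hgJg : ∀ x : H, J (g x) = (starRingEnd ℂ lam) • g (J x) := by
    intro x
    have h1 := congrArg J (hUx x)
    rw [hJK, hsmul] at h1
    have h2 := congrArg g h1
    rw [hgg, map_smul] at h2
    exact h2
  set mu : ℂ := starRingEnd ℂ lam with hmudef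
  have hmusq : mu * mu = 1 := by
    have h1 : J e = (mu * mu) • J e := by
      conv_lhs => rw [← hgg e]
      rw [hgJg, hgJg, map_smul, hgg, smul_smul]
    exact hscal (mu * mu) 1 (J e) hJe (by rw [← h1, one_smul])
  -- implementation of σ by J
  have himpl : ∀ (T : CompactOp H) (x : H), (σ T).1 x = J (T.1 (K x)) := by
    intro T x
    conv_lhs => rw [← hJK x]
    exact hint T (K x)
  -- J ∘ J = ± id
  have hJJpm : (∀ x : H, J (J x) = x) ∨ (∀ x : H, J (J x) = -x) := by
    rcases mul_self_eq_one_iff.mp hc₂sq with h | h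
    · left; intro x; rw [hJJ x, h, one_smul]
    · right; intro x; rw [hJJ x, h, neg_one_smul]
  -- homogeneity of J
  have hgpm : (∀ x : H, J (g x) = g (J x)) ∨ (∀ x : H, J (g x) = -(g (J x))) := by
    rcases mul_self_eq_one_iff.mp hmusq with h | h
    · left; intro x; rw [hgJg x, h, one_smul]
    · right; intro x; rw [hgJg x, h, neg_one_smul]
  exact ⟨J, K, hKJ, hJK, hadd, hsmul, hinner, himpl, hJJpm, hgpm⟩
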